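/- Define p : ℤ → ℝ by p(n) = 0 for -5 ≤ n ≤ -1, p(0) = 1, and p(i) = (1/6)·(p(i-1) + p(i-2) + p(i-3) + p(i-4) + p(i-5) + p(i-6)) for i ≥ 1. Then the sequence p(i) converges to 2/7 as i → ∞. -/
import Mathlib


open Filter

private def Q (p : ℤ → ℝ) (n : ℕ) : ℝ := p n

private def MM (p : ℤ → ℝ) (n : ℕ) : ℝ :=
  max (Q p n) (max (Q p (n+1)) (max (Q p (n+2)) (max (Q p (n+3)) (max (Q p (n+4)) (Q p (n+5))))))

private def Mm (p : ℤ → ℝ) (n : ℕ) : ℝ :=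
  min (Q p n) (min (Q p (n+1)) (min (Q p (n+2)) (min (Q p (n+3)) (min (Q p (n+4)) (Q p (n+5))))))

private lemma min6_choice (a b c d e f : ℝ) :
    min a (min b (min c (min d (min e f)))) = a ∨
    min a (min b (min c (min d (min e f)))) = b ∨
    min a (min b (min c (min d (min e f)))) = c ∨
    min a (min b (min c (min d (min e f)))) = d ∨
    min a (min b (min c (min d (min e f)))) = e ∨
    min a (min b (min c (min d (min e f)))) = f := by
  simp only [min_def]; split_ifs <;> tauto

private lemma max6_choice (a b c d e f : ℝ) :
    max a (max b (max c (max d (max e f)))) = a ∨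
    max a (max b (max c (max d (max e f)))) = b ∨
    max a (max b (max c (max d (max e f)))) = c ∨
    max a (max b (max c (max d (max e f)))) = d ∨
    max a (max b (max c (max d (max e f)))) = e ∨
    max a (max b (max c (max d (max e f)))) = f := by
  simp only [max_def]; split_ifs <;> tauto

theorem dice_hitting_prob_tendsto (p : ℤ → ℝ)
    (hneg : ∀ n : ℤ, -5 ≤ n → n ≤ -1 → p n = 0)
    (h0 : p 0 = 1)
    (hrec : ∀ i : ℤ, 1 ≤ i →
      p i = (1/6) * (p (i-1) + p (i-2) + p (i-3) + p (i-4) + p (i-5) + p (i-6))) :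
    Tendsto (fun i : ℕ => p i) atTop (nhds (2/7)) := by
  -- normalized recurrence over ℕ
  have hrecN : ∀ n : ℕ, 6 * Q p (n+6) =
      Q p (n+5) + Q p (n+4) + Q p (n+3) + Q p (n+2) + Q p (n+1) + Q p n := by
    intro n
    have h := hrec ((n:ℤ)+6) (by omega)
    unfold Q
    push_cast
    ring_nf at h ⊢
    linarith [h]
  -- every later value is bounded by the window max / min
  have hglob : ∀ a k : ℕ, a ≤ k → Q p k ≤ MM p a := by
    intro a k
    induction k using Nat.strong_induction_on with
    | _ k ih =>
      intro hak
      have hdef : MM p a = max (Q p a) (max (Q p (a+1)) (max (Q p (a+2))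
          (max (Q p (a+3)) (max (Q p (a+4)) (Q p (a+5)))))) := rfl
      by_cases hk : k ≤ a + 5
      · have hc : k = a ∨ k = a+1 ∨ k = a+2 ∨ k = a+3 ∨ k = a+4 ∨ k = a+5 := by omega
        rcases hc with rfl|rfl|rfl|rfl|rfl|rfl <;> rw [hdef]
        · exact le_max_left _ _
        · exact le_max_of_le_right (le_max_left _ _)
        · exact le_max_of_le_right (le_max_of_le_right (le_max_left _ _))
        · exact le_max_of_le_right (le_max_of_le_right (le_max_of_le_right (le_max_left _ _)))
        · exact le_max_of_le_right (le_max_of_le_right (le_max_of_le_right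
            (le_max_of_le_right (le_max_left _ _))))
        · exact le_max_of_le_right (le_max_of_le_right (le_max_of_le_right
            (le_max_of_le_right (le_max_right _ _))))
      · obtain ⟨t, rfl⟩ : ∃ t, k = t + 6 := ⟨k - 6, by omega⟩
        have e := hrecN t
        have b0 := ih t (by omega) (by omega)
        have b1 := ih (t+1) (by omega) (by omega)
        have b2 := ih (t+2) (by omega) (by omega)
        have b3 := ih (t+3) (by omega) (by omega)
        have b4 := ih (t+4) (by omega) (by omega)
        have b5 := ih (t+5) (by omega) (by omega)
        linarith
  have hglobm : ∀ a k : ℕ, a ≤ k → Mm p a ≤ Q p k := by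
    intro a k
    induction k using Nat.strong_induction_on with
    | _ k ih =>
      intro hak
      have hdef : Mm p a = min (Q p a) (min (Q p (a+1)) (min (Q p (a+2))
          (min (Q p (a+3)) (min (Q p (a+4)) (Q p (a+5)))))) := rfl
      by_cases hk : k ≤ a + 5
      · have hc : k = a ∨ k = a+1 ∨ k = a+2 ∨ k = a+3 ∨ k = a+4 ∨ k = a+5 := by omega
        rcases hc with rfl|rfl|rfl|rfl|rfl|rfl <;> rw [hdef]
        · exact min_le_left _ _
        · exact min_le_of_right_le (min_le_left _ _)
        · exact min_le_of_right_le (min_le_of_right_le (min_le_left _ _))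
        · exact min_le_of_right_le (min_le_of_right_le (min_le_of_right_le (min_le_left _ _)))
        · exact min_le_of_right_le (min_le_of_right_le (min_le_of_right_le
            (min_le_of_right_le (min_le_left _ _))))
        · exact min_le_of_right_le (min_le_of_right_le (min_le_of_right_le
            (min_le_of_right_le (min_le_right _ _))))
      · obtain ⟨t, rfl⟩ : ∃ t, k = t + 6 := ⟨k - 6, by omega⟩
        have e := hrecN t
        have b0 := ih t (by omega) (by omega)
        have b1 := ih (t+1) (by omega) (by omega)
        have b2 := ih (t+2) (by omega) (by omega)
        have b3 := ih (t+3) (by omega) (by omega)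
        have b4 := ih (t+4) (by omega) (by omega)
        have b5 := ih (t+5) (by omega) (by omega)
        linarith
  have hmM : ∀ n : ℕ, Mm p n ≤ MM p n := fun n =>
    le_trans (hglobm n n le_rfl) (hglob n n le_rfl)
  -- the new value mixes in the minimum / maximum
  have hq6le : ∀ n : ℕ, 6 * Q p (n+6) ≤ 5 * MM p n + Mm p n := by
    intro n
    have hdef : Mm p n = min (Q p n) (min (Q p (n+1)) (min (Q p (n+2))
        (min (Q p (n+3)) (min (Q p (n+4)) (Q p (n+5)))))) := rfl
    rcases min6_choice (Q p n) (Q p (n+1)) (Q p (n+2)) (Q p (n+3)) (Q p (n+4)) (Q p (n+5))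
      with h|h|h|h|h|h <;> rw [← hdef] at h <;>
    linarith [hrecN n, hglob n n le_rfl, hglob n (n+1) (by omega), hglob n (n+2) (by omega),
      hglob n (n+3) (by omega), hglob n (n+4) (by omega), hglob n (n+5) (by omega)]
  have hq6ge : ∀ n : ℕ, 5 * Mm p n + MM p n ≤ 6 * Q p (n+6) := by
    intro n
    have hdef : MM p n = max (Q p n) (max (Q p (n+1)) (max (Q p (n+2))
        (max (Q p (n+3)) (max (Q p (n+4)) (Q p (n+5)))))) := rfl
    rcases max6_choice (Q p n) (Q p (n+1)) (Q p (n+2)) (Q p (n+3)) (Q p (n+4)) (Q p (n+5))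
      with h|h|h|h|h|h <;> rw [← hdef] at h <;>
    linarith [hrecN n, hglobm n n le_rfl, hglobm n (n+1) (by omega), hglobm n (n+2) (by omega),
      hglobm n (n+3) (by omega), hglobm n (n+4) (by omega), hglobm n (n+5) (by omega)]
  -- normalized recurrence instances
  have e7 : ∀ n : ℕ, 6 * Q p (n+7) =
      Q p (n+6) + Q p (n+5) + Q p (n+4) + Q p (n+3) + Q p (n+2) + Q p (n+1) := by
    intro n; have h := hrecN (n+1); simp only [Nat.add_assoc, Nat.reduceAdd] at h; exact h
  have e8 : ∀ n : ℕ, 6 * Q p (n+8) =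
      Q p (n+7) + Q p (n+6) + Q p (n+5) + Q p (n+4) + Q p (n+3) + Q p (n+2) := by
    intro n; have h := hrecN (n+2); simp only [Nat.add_assoc, Nat.reduceAdd] at h; exact h
  have e9 : ∀ n : ℕ, 6 * Q p (n+9) =
      Q p (n+8) + Q p (n+7) + Q p (n+6) + Q p (n+5) + Q p (n+4) + Q p (n+3) := by
    intro n; have h := hrecN (n+3); simp only [Nat.add_assoc, Nat.reduceAdd] at h; exact h
  have e10 : ∀ n : ℕ, 6 * Q p (n+10) =
      Q p (n+9) + Q p (n+8) + Q p (n+7) + Q p (n+6) + Q p (n+5) + Q p (n+4) := by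
    intro n; have h := hrecN (n+4); simp only [Nat.add_assoc, Nat.reduceAdd] at h; exact h
  have e11 : ∀ n : ℕ, 6 * Q p (n+11) =
      Q p (n+10) + Q p (n+9) + Q p (n+8) + Q p (n+7) + Q p (n+6) + Q p (n+5) := by
    intro n; have h := hrecN (n+5); simp only [Nat.add_assoc, Nat.reduceAdd] at h; exact h
  -- each of the next six values keeps a (1/6) share of Q p (n+6)
  have g7 : ∀ n : ℕ, 6 * Q p (n+7) ≤ 5 * MM p n + Q p (n+6) := fun n => by
    linarith [e7 n, hglob n (n+1) (by omega), hglob n (n+2) (by omega), hglob n (n+3) (by omega),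
      hglob n (n+4) (by omega), hglob n (n+5) (by omega)]
  have g8 : ∀ n : ℕ, 6 * Q p (n+8) ≤ 5 * MM p n + Q p (n+6) := fun n => by
    linarith [e8 n, hglob n (n+2) (by omega), hglob n (n+3) (by omega), hglob n (n+4) (by omega),
      hglob n (n+5) (by omega), hglob n (n+7) (by omega)]
  have g9 : ∀ n : ℕ, 6 * Q p (n+9) ≤ 5 * MM p n + Q p (n+6) := fun n => by
    linarith [e9 n, hglob n (n+3) (by omega), hglob n (n+4) (by omega), hglob n (n+5) (by omega),
      hglob n (n+7) (by omega), hglob n (n+8) (by omega)]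
  have g10 : ∀ n : ℕ, 6 * Q p (n+10) ≤ 5 * MM p n + Q p (n+6) := fun n => by
    linarith [e10 n, hglob n (n+4) (by omega), hglob n (n+5) (by omega), hglob n (n+7) (by omega),
      hglob n (n+8) (by omega), hglob n (n+9) (by omega)]
  have g11 : ∀ n : ℕ, 6 * Q p (n+11) ≤ 5 * MM p n + Q p (n+6) := fun n => by
    linarith [e11 n, hglob n (n+5) (by omega), hglob n (n+7) (by omega), hglob n (n+8) (by omega),
      hglob n (n+9) (by omega), hglob n (n+10) (by omega)]
  have g7' : ∀ n : ℕ, 5 * Mm p n + Q p (n+6) ≤ 6 * Q p (n+7) := fun n => by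
    linarith [e7 n, hglobm n (n+1) (by omega), hglobm n (n+2) (by omega), hglobm n (n+3) (by omega),
      hglobm n (n+4) (by omega), hglobm n (n+5) (by omega)]
  have g8' : ∀ n : ℕ, 5 * Mm p n + Q p (n+6) ≤ 6 * Q p (n+8) := fun n => by
    linarith [e8 n, hglobm n (n+2) (by omega), hglobm n (n+3) (by omega), hglobm n (n+4) (by omega),
      hglobm n (n+5) (by omega), hglobm n (n+7) (by omega)]
  have g9' : ∀ n : ℕ, 5 * Mm p n + Q p (n+6) ≤ 6 * Q p (n+9) := fun n => by
    linarith [e9 n, hglobm n (n+3) (by omega), hglobm n (n+4) (by omega), hglobm n (n+5) (by omega),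
      hglobm n (n+7) (by omega), hglobm n (n+8) (by omega)]
  have g10' : ∀ n : ℕ, 5 * Mm p n + Q p (n+6) ≤ 6 * Q p (n+10) := fun n => by
    linarith [e10 n, hglobm n (n+4) (by omega), hglobm n (n+5) (by omega), hglobm n (n+7) (by omega),
      hglobm n (n+8) (by omega), hglobm n (n+9) (by omega)]
  have g11' : ∀ n : ℕ, 5 * Mm p n + Q p (n+6) ≤ 6 * Q p (n+11) := fun n => by
    linarith [e11 n, hglobm n (n+5) (by omega), hglobm n (n+7) (by omega), hglobm n (n+8) (by omega),
      hglobm n (n+9) (by omega), hglobm n (n+10) (by omega)]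
  -- contraction of the window max and min
  have hMcontr : ∀ n : ℕ, MM p (n+6) ≤ 35/36 * MM p n + 1/36 * Mm p n := by
    intro n
    have hdef : MM p (n+6) = max (Q p (n+6)) (max (Q p (n+6+1)) (max (Q p (n+6+2))
        (max (Q p (n+6+3)) (max (Q p (n+6+4)) (Q p (n+6+5)))))) := rfl
    simp only [Nat.add_assoc, Nat.reduceAdd] at hdef
    rw [hdef]
    have h6 := hq6le n
    have hm := hmM n
    refine max_le ?_ (max_le ?_ (max_le ?_ (max_le ?_ (max_le ?_ ?_)))) <;>
      linarith [g7 n, g8 n, g9 n, g10 n, g11 n]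
  have hmcontr : ∀ n : ℕ, 35/36 * Mm p n + 1/36 * MM p n ≤ Mm p (n+6) := by
    intro n
    have hdef : Mm p (n+6) = min (Q p (n+6)) (min (Q p (n+6+1)) (min (Q p (n+6+2))
        (min (Q p (n+6+3)) (min (Q p (n+6+4)) (Q p (n+6+5)))))) := rfl
    simp only [Nat.add_assoc, Nat.reduceAdd] at hdef
    rw [hdef]
    have h6 := hq6ge n
    have hm := hmM n
    refine le_min ?_ (le_min ?_ (le_min ?_ (le_min ?_ (le_min ?_ ?_)))) <;>
      linarith [g7' n, g8' n, g9' n, g10' n, g11' n]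
  -- decreasing oscillation
  have hstep1 : ∀ n : ℕ, MM p (n+1) ≤ MM p n := by
    intro n
    have hdef : MM p (n+1) = max (Q p (n+1)) (max (Q p (n+1+1)) (max (Q p (n+1+2))
        (max (Q p (n+1+3)) (max (Q p (n+1+4)) (Q p (n+1+5)))))) := rfl
    simp only [Nat.add_assoc, Nat.reduceAdd] at hdef
    rw [hdef]
    refine max_le ?_ (max_le ?_ (max_le ?_ (max_le ?_ (max_le ?_ ?_)))) <;>
      exact hglob n _ (by omega)
  have hstep1m : ∀ n : ℕ, Mm p n ≤ Mm p (n+1) := by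
    intro n
    have hdef : Mm p (n+1) = min (Q p (n+1)) (min (Q p (n+1+1)) (min (Q p (n+1+2))
        (min (Q p (n+1+3)) (min (Q p (n+1+4)) (Q p (n+1+5)))))) := rfl
    simp only [Nat.add_assoc, Nat.reduceAdd] at hdef
    rw [hdef]
    refine le_min ?_ (le_min ?_ (le_min ?_ (le_min ?_ (le_min ?_ ?_)))) <;>
      exact hglobm n _ (by omega)
  have hanti : ∀ a b : ℕ, a ≤ b → MM p b - Mm p b ≤ MM p a - Mm p a := by
    intro a b hab
    induction b, hab using Nat.le_induction with
    | base => exact le_rfl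
    | succ b hb ih => linarith [hstep1 b, hstep1m b]
  -- geometric bound
  have hd6 : ∀ n : ℕ, MM p (n+6) - Mm p (n+6) ≤ 17/18 * (MM p n - Mm p n) := fun n => by
    linarith [hMcontr n, hmcontr n]
  have hgeo : ∀ n : ℕ, MM p n - Mm p n ≤ (17/18 : ℝ)^(n/6) * (MM p 0 - Mm p 0) := by
    intro n
    induction n using Nat.strong_induction_on with
    | _ n ih =>
      by_cases h : n < 6
      · rw [show n/6 = 0 by omega, pow_zero, one_mul]
        exact hanti 0 n (by omega)
      · obtain ⟨t, rfl⟩ : ∃ t, n = t + 6 := ⟨n - 6, by omega⟩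
        rw [show (t+6)/6 = t/6 + 1 by omega, pow_succ]
        calc MM p (t+6) - Mm p (t+6) ≤ 17/18 * (MM p t - Mm p t) := hd6 t
          _ ≤ 17/18 * ((17/18 : ℝ)^(t/6) * (MM p 0 - Mm p 0)) :=
              mul_le_mul_of_nonneg_left (ih t (by omega)) (by norm_num)
          _ = (17/18 : ℝ)^(t/6) * (17/18) * (MM p 0 - Mm p 0) := by ring
  -- the conserved quantity pins the limit at 2/7
  have hinv : ∀ n : ℕ, 6 * p (n:ℤ) + 5 * p ((n:ℤ)-1) + 4 * p ((n:ℤ)-2) + 3 * p ((n:ℤ)-3)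
      + 2 * p ((n:ℤ)-4) + p ((n:ℤ)-5) = 6 := by
    intro n
    induction n with
    | zero =>
      have n1 := hneg (-1) (by norm_num) (by norm_num)
      have n2 := hneg (-2) (by norm_num) (by norm_num)
      have n3 := hneg (-3) (by norm_num) (by norm_num)
      have n4 := hneg (-4) (by norm_num) (by norm_num)
      have n5 := hneg (-5) (by norm_num) (by norm_num)
      norm_num [h0, n1, n2, n3, n4, n5]
    | succ n ih =>
      have hr := hrec ((n:ℤ)+1) (by omega)
      push_cast
      ring_nf at hr ih ⊢
      linarith [hr, ih]
  have hbracket : ∀ n : ℕ, Mm p n ≤ 2/7 ∧ 2/7 ≤ MM p n := by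
    intro n
    have h := hinv (n+5)
    have c1 : ((n+5:ℕ):ℤ) - 1 = ((n+4:ℕ):ℤ) := by push_cast; ring
    have c2 : ((n+5:ℕ):ℤ) - 2 = ((n+3:ℕ):ℤ) := by push_cast; ring
    have c3 : ((n+5:ℕ):ℤ) - 3 = ((n+2:ℕ):ℤ) := by push_cast; ring
    have c4 : ((n+5:ℕ):ℤ) - 4 = ((n+1:ℕ):ℤ) := by push_cast; ring
    have c5 : ((n+5:ℕ):ℤ) - 5 = ((n:ℕ):ℤ) := by push_cast; ring
    rw [c1, c2, c3, c4, c5] at h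
    have h' : 6 * Q p (n+5) + 5 * Q p (n+4) + 4 * Q p (n+3) + 3 * Q p (n+2)
        + 2 * Q p (n+1) + Q p n = 6 := h
    constructor
    · linarith [h', hglobm n n le_rfl, hglobm n (n+1) (by omega), hglobm n (n+2) (by omega),
        hglobm n (n+3) (by omega), hglobm n (n+4) (by omega), hglobm n (n+5) (by omega)]
    · linarith [h', hglob n n le_rfl, hglob n (n+1) (by omega), hglob n (n+2) (by omega),
        hglob n (n+3) (by omega), hglob n (n+4) (by omega), hglob n (n+5) (by omega)]
  have habs : ∀ n : ℕ, |Q p n - 2/7| ≤ MM p n - Mm p n := fun n =>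
    abs_le.mpr ⟨by linarith [(hbracket n).2, hglobm n n le_rfl],
      by linarith [(hbracket n).1, hglob n n le_rfl]⟩
  -- limits
  have hdiv : Tendsto (fun n : ℕ => n / 6) atTop atTop :=
    tendsto_atTop_atTop.mpr fun b => ⟨6*b, fun a ha => by omega⟩
  have hpow : Tendsto (fun n : ℕ => ((17:ℝ)/18)^(n/6)) atTop (nhds 0) :=
    (tendsto_pow_atTop_nhds_zero_of_lt_one (by norm_num) (by norm_num)).comp hdiv
  have hdzero : Tendsto (fun n : ℕ => MM p n - Mm p n) atTop (nhds 0) :=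
    squeeze_zero (fun n => by linarith [hmM n]) hgeo
      (by simpa using hpow.mul_const (MM p 0 - Mm p 0))
  have hQ : Tendsto (fun n : ℕ => Q p n - 2/7) atTop (nhds 0) :=
    squeeze_zero_norm (fun n => by simpa [Real.norm_eq_abs] using habs n) hdzero
  have hfin := hQ.add_const (2/7)
  simp only [sub_add_cancel, zero_add] at hfin
  exact hfin
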